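/- Let m, k, n_s ≥ 1 and let 𝒳 be a nonempty set. Let M_P ∈ ℝ^{m × n_s} be a row-stochastic matrix of rank m, and let p : 𝒳 → ℝ^m be a function whose values are probability vectors and such that for each i ∈ {1,…,m} there exists x ∈ 𝒳 with p_i(x) > 1/2. Let M_Q ∈ ℝ^{k × n_s} be any row-stochastic matrix and q : 𝒳 → ℝ^k any function whose values are probability vectors, such that M_P^⊤ p(x) = M_Q^⊤ q(x) for all x ∈ 𝒳. Then k ≥ m. -/
import Mathlib


open Matrix

/-- **Lower bound on the number of latent classes.** If a full-rank row-stochastic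
model `(p, M_P)` with `m` latent classes satisfies weak overlap and another
row-stochastic model `(q, M_Q)` with `k` latent classes reproduces the same
observed conditional distribution `M_Pᵀ p(x) = M_Qᵀ q(x)` for all `x`, then
`k ≥ m`. -/
theorem alternative_model_needs_at_least_as_many_classes
    (m k n_s : ℕ) (hm : 1 ≤ m) (hk : 1 ≤ k) (hns : 1 ≤ n_s)
    (𝒳 : Type*) [Nonempty 𝒳]
    (MP : Matrix (Fin m) (Fin n_s) ℝ)
    (hMP_nonneg : ∀ z s, 0 ≤ MP z s) (hMP_rowsum : ∀ z, ∑ s, MP z s = 1)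
    (hMP_rank : MP.rank = m)
    (p : 𝒳 → Fin m → ℝ)
    (hp_nonneg : ∀ x i, 0 ≤ p x i) (hp_sum : ∀ x, ∑ i, p x i = 1)
    (hoverlap : ∀ i : Fin m, ∃ x, 1 / 2 < p x i)
    (MQ : Matrix (Fin k) (Fin n_s) ℝ)
    (hMQ_nonneg : ∀ z s, 0 ≤ MQ z s) (hMQ_rowsum : ∀ z, ∑ s, MQ z s = 1)
    (q : 𝒳 → Fin k → ℝ)
    (hq_nonneg : ∀ x i, 0 ≤ q x i) (hq_sum : ∀ x, ∑ i, q x i = 1)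
    (hobs : ∀ x, MP.transpose *ᵥ p x = MQ.transpose *ᵥ q x) :
    m ≤ k := by
  choose xs hxs using hoverlap
  set P : Matrix (Fin m) (Fin m) ℝ := fun i j => p (xs i) j with hP
  set Q : Matrix (Fin m) (Fin k) ℝ := fun i j => q (xs i) j with hQ
  -- P is strictly diagonally dominant, hence invertible
  have hdet : P.det ≠ 0 := by
    apply det_ne_zero_of_sum_row_lt_diag
    intro i
    have h1 : ∑ j ∈ Finset.univ.erase i, ‖P i j‖ = 1 - P i i := by
      have := hp_sum (xs i)
      simp only [hP]
      rw [Finset.sum_congr rfl (fun j _ => Real.norm_of_nonneg (hp_nonneg (xs i) j)),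
        Finset.sum_erase_eq_sub (Finset.mem_univ i), this]
    rw [h1, Real.norm_of_nonneg (hp_nonneg (xs i) i)]
    have := hxs i
    simp only [hP]
    linarith
  -- P * MP = Q * MQ
  have hPM : P * MP = Q * MQ := by
    ext i s
    have := congrFun (hobs (xs i)) s
    simpa [Matrix.mul_apply, Matrix.mulVec, dotProduct, Matrix.transpose_apply,
      mul_comm] using this
  have h1 : (P * MP).rank = MP.rank :=
    Matrix.rank_mul_eq_right_of_isUnit_det P MP (isUnit_iff_ne_zero.mpr hdet)
  have h2 : (Q * MQ).rank ≤ MQ.rank := Matrix.rank_mul_le_right Q MQ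
  have h3 : MQ.rank ≤ k := by
    simpa using Matrix.rank_le_card_height MQ
  calc m = MP.rank := hMP_rank.symm
    _ = (P * MP).rank := h1.symm
    _ = (Q * MQ).rank := by rw [hPM]
    _ ≤ MQ.rank := h2
    _ ≤ k := h3
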